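/- Let F be a finite simple acyclic graph (a forest). If F has at least one edge and F contains no P_3 as an induced subgraph, then F is ω-unfrozen and χ-unfrozen. If F contains P_3 as an induced subgraph, then F is neither ω-unfrozen nor χ-unfrozen. -/

import Mathlib

open SimpleGraph

/-- The independence number of a graph: the maximum size of an independent set. -/
noncomputable def indNum {V : Type*} (G : SimpleGraph V) : ℕ :=
  sSup {n | ∃ s : Finset V, (∀ a ∈ s, ∀ b ∈ s, a ≠ b → ¬ G.Adj a b) ∧ s.card = n}

/-- The vertex cover number of a graph: the minimum size of a vertex cover. -/
noncomputable def covNum {V : Type*} (G : SimpleGraph V) : ℕ :=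
  sInf {n | ∃ s : Finset V, (∀ a b : V, G.Adj a b → a ∈ s ∨ b ∈ s) ∧ s.card = n}

/-- The clique number of a graph: the maximum size of a clique. -/
noncomputable def clNum {V : Type*} (G : SimpleGraph V) : ℕ :=
  sSup {n | ∃ s : Finset V, G.IsNClique n s}

/-- The graph obtained from `G` by adding the edge `{u, v}`. -/
def adjoinEdge {V : Type*} (G : SimpleGraph V) (u v : V) : SimpleGraph V :=
  G ⊔ SimpleGraph.fromEdgeSet {s(u, v)}

/-- `G` contains the path `P₃` as an induced subgraph. -/
def HasInducedP3 {V : Type*} (G : SimpleGraph V) : Prop :=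
  ∃ u v w : V, u ≠ v ∧ v ≠ w ∧ u ≠ w ∧ G.Adj u v ∧ G.Adj v w ∧ ¬ G.Adj u w

/-- `G` is bipartite: its vertex set can be partitioned into two sets such that
every edge joins a vertex of one set to a vertex of the other. -/
def IsBipartite {V : Type*} (G : SimpleGraph V) : Prop :=
  ∃ s : Set V, ∀ ⦃a b : V⦄, G.Adj a b → (a ∈ s ∧ b ∉ s) ∨ (a ∉ s ∧ b ∈ s)

section MyAux
variable {V : Type*}

lemma adjoinEdge_adj (F : SimpleGraph V) (u v a b : V) :
    (adjoinEdge F u v).Adj a b ↔ F.Adj a b ∨ (s(a, b) = s(u, v) ∧ a ≠ b) := by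
  simp [adjoinEdge]

lemma not_acyclic_of_triangle {F : SimpleGraph V} {a b c : V}
    (hab : F.Adj a b) (hbc : F.Adj b c) (hac : F.Adj a c) : ¬ F.IsAcyclic := by
  intro h
  have hcyc : (Walk.cons hab (Walk.cons hbc (Walk.cons hac.symm Walk.nil))).IsCycle := by
    rw [Walk.cons_isCycle_iff]
    constructor
    · simp [Walk.isPath_def, hbc.ne, hab.ne', hac.ne']
    · simp [Sym2.eq_iff, hab.ne, hbc.ne, hac.ne, hab.ne']
  exact h _ hcyc

lemma path_length_eq_dist {F : SimpleGraph V} (h : F.IsAcyclic)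
    {r x : V} (p : F.Walk r x) (hp : p.IsPath) : p.length = F.dist r x := by
  obtain ⟨q, hq, hql⟩ := p.reachable.exists_path_of_dist
  have heq : (⟨p, hp⟩ : F.Path r x) = ⟨q, hq⟩ := h.path_unique _ _
  rw [← hql]
  exact congrArg Walk.length (congrArg Subtype.val heq)

lemma dist_parity {F : SimpleGraph V} (h : F.IsAcyclic) {r x y : V}
    (hr : F.Reachable r x) (hxy : F.Adj x y) :
    Odd (F.dist r y) ↔ ¬ Odd (F.dist r x) := by
  classical
  obtain ⟨p, hp, hpl⟩ := hr.exists_path_of_dist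
  by_cases hy : y ∈ p.support
  · have ht : (p.takeUntil y hy).IsPath := hp.takeUntil hy
    have hxnt : x ∉ (p.takeUntil y hy).support := by
      intro hx
      have hnd : ((p.takeUntil y hy).append (p.dropUntil y hy)).support.Nodup := by
        rw [p.take_spec hy]; exact hp.support_nodup
      rw [Walk.support_append, List.nodup_append] at hnd
      obtain ⟨-, -, hdisj⟩ := hnd
      have hxd : x ∈ (p.dropUntil y hy).support.tail := by
        have hxd' : x ∈ (p.dropUntil y hy).support := Walk.end_mem_support _
        rw [Walk.support_eq_cons] at hxd'
        rcases List.mem_cons.mp hxd' with h' | h'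
        · exact absurd h'.symm hxy.ne'
        · exact h'
      exact hdisj x hx x hxd rfl
    have hw : ((p.takeUntil y hy).concat hxy.symm).IsPath := by
      rw [← Walk.isPath_reverse_iff, Walk.reverse_concat]
      refine Walk.IsPath.cons (ht.reverse) ?_
      rwa [Walk.support_reverse, List.mem_reverse]
    have h1 : (p.takeUntil y hy).length = F.dist r y := path_length_eq_dist h _ ht
    have h2 : (p.takeUntil y hy).length + 1 = F.dist r x := by
      have := path_length_eq_dist h _ hw
      rwa [Walk.length_concat] at this
    rw [← h1, ← h2]
    simp [Nat.odd_add_one]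
  · have hw : (p.concat hxy).IsPath := by
      rw [← Walk.isPath_reverse_iff, Walk.reverse_concat]
      refine Walk.IsPath.cons (hp.reverse) ?_
      rwa [Walk.support_reverse, List.mem_reverse]
    have h2 : p.length + 1 = F.dist r y := by
      have := path_length_eq_dist h _ hw
      rwa [Walk.length_concat] at this
    rw [← h2, ← hpl]
    simp [Nat.odd_add_one]

lemma acyclic_colorable_two {F : SimpleGraph V} (h : F.IsAcyclic) : F.Colorable 2 := by
  classical
  have C : F.Coloring Bool := Coloring.mk
    (fun x => decide (Odd (F.dist (Quot.out (F.connectedComponentMk x)) x)))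
    (by
      intro a b hab hc
      have hcomp : F.connectedComponentMk a = F.connectedComponentMk b :=
        ConnectedComponent.sound hab.reachable
      rw [hcomp] at hc
      set r := Quot.out (F.connectedComponentMk b) with hr
      have hra : F.Reachable r a := by
        apply ConnectedComponent.exact
        show F.connectedComponentMk r = _
        rw [hr, ← hcomp]
        exact Quot.out_eq _
      have hpar := dist_parity h hra hab
      simp only [decide_eq_decide] at hc
      rw [hc] at hpar
      tauto)
  simpa using C.colorable

lemma clNum_bddAbove [Fintype V] (G : SimpleGraph V) :
    BddAbove {n | ∃ s : Finset V, G.IsNClique n s} := by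
  refine ⟨Fintype.card V, ?_⟩
  rintro n ⟨s, hs⟩
  rw [← hs.2]
  exact s.card_le_univ

lemma clNum_le_two_of_no_triangle [Fintype V] {G : SimpleGraph V}
    (htri : ∀ x y z : V, G.Adj x y → G.Adj y z → G.Adj x z → False) :
    ∀ n ∈ {n | ∃ s : Finset V, G.IsNClique n s}, n ≤ 2 := by
  rintro n ⟨s, hs⟩
  by_contra hn
  have h3 : 2 < s.card := by rw [hs.2]; omega
  rw [Finset.two_lt_card_iff] at h3
  obtain ⟨x, y, z, hx, hy, hz, hxy, hxz, hyz⟩ := h3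
  exact htri x y z (hs.1 (Finset.mem_coe.mpr hx) (Finset.mem_coe.mpr hy) hxy)
    (hs.1 (Finset.mem_coe.mpr hy) (Finset.mem_coe.mpr hz) hyz)
    (hs.1 (Finset.mem_coe.mpr hx) (Finset.mem_coe.mpr hz) hxz)

lemma clNum_eq_two [Fintype V] {G : SimpleGraph V} {a b : V} (hab : G.Adj a b)
    (htri : ∀ x y z : V, G.Adj x y → G.Adj y z → G.Adj x z → False) :
    clNum G = 2 := by
  classical
  have hmem : 2 ∈ {n | ∃ s : Finset V, G.IsNClique n s} := by
    refine ⟨{a, b}, ⟨?_, ?_⟩⟩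
    · intro x hx y hy hne
      simp only [Finset.coe_insert, Finset.coe_singleton, Set.mem_insert_iff,
        Set.mem_singleton_iff] at hx hy
      rcases hx with rfl | rfl <;> rcases hy with rfl | rfl
      · exact absurd rfl hne
      · exact hab
      · exact hab.symm
      · exact absurd rfl hne
    · exact Finset.card_pair hab.ne
  refine le_antisymm ?_ (le_csSup (clNum_bddAbove G) hmem)
  exact csSup_le ⟨2, hmem⟩ (clNum_le_two_of_no_triangle htri)

lemma matching_colorable [Fintype V] (F : SimpleGraph V)
    (hU : ∀ x a b : V, F.Adj x a → F.Adj x b → a = b) (u v : V) (huv : u ≠ v)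
    (hnadj : ¬ F.Adj u v) : (adjoinEdge F u v).Colorable 2 := by
  classical
  let f := Fintype.equivFin V
  have C : (adjoinEdge F u v).Coloring Bool := Coloring.mk
    (fun x => if x = u then false else if x = v then true else if F.Adj x u then true
      else if F.Adj x v then false else decide (∃ y, F.Adj x y ∧ (f x : ℕ) < f y))
    (by
      intro a b hab hc
      rw [adjoinEdge_adj] at hab
      rcases hab with hab | ⟨he, hne⟩
      · have hne := hab.ne
        by_cases hau : u = a
        · subst hau
          have hbv : b ≠ v := fun h => hnadj (h ▸ hab)
          rw [if_pos rfl, if_neg hab.ne', if_neg hbv, if_pos hab.symm] at hc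
          simp at hc
        · by_cases hav : v = a
          · subst hav
            have hbu : b ≠ u := fun h => hnadj (h ▸ hab).symm
            have hbnu : ¬ F.Adj b u := fun h => huv (hU b u v h hab.symm)
            rw [if_neg (Ne.symm huv), if_pos rfl, if_neg hab.ne', if_neg hbu,
              if_neg hbnu, if_pos hab.symm] at hc
            simp at hc
          · by_cases hbu : u = b
            · subst hbu
              rw [if_neg (fun h => hau h.symm), if_neg (fun h => hav h.symm),
                if_pos hab, if_pos rfl] at hc
              simp at hc
            · by_cases hbv : v = b
              · subst hbv
                have hanu : ¬ F.Adj a u := fun h => huv (hU a u v h hab)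
                rw [if_neg (fun h => hau h.symm), if_neg (fun h => hav h.symm),
                  if_neg hanu, if_pos hab, if_neg (Ne.symm huv), if_pos rfl] at hc
                simp at hc
              · have hanu : ¬ F.Adj a u := fun h => hbu (hU a u b h hab)
                have hanv : ¬ F.Adj a v := fun h => hbv (hU a v b h hab)
                have hbnu : ¬ F.Adj b u := fun h => hau (hU b u a h hab.symm)
                have hbnv : ¬ F.Adj b v := fun h => hav (hU b v a h hab.symm)
                rw [if_neg (fun h => hau h.symm), if_neg (fun h => hav h.symm),
                  if_neg hanu, if_neg hanv, if_neg (fun h => hbu h.symm),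
                  if_neg (fun h => hbv h.symm), if_neg hbnu, if_neg hbnv] at hc
                have ha' : (∃ y, F.Adj a y ∧ (f a : ℕ) < f y) ↔ (f a : ℕ) < f b :=
                  ⟨fun ⟨y, hy, hlt⟩ => (hU a y b hy hab) ▸ hlt, fun h => ⟨b, hab, h⟩⟩
                have hb' : (∃ y, F.Adj b y ∧ (f b : ℕ) < f y) ↔ (f b : ℕ) < f a :=
                  ⟨fun ⟨y, hy, hlt⟩ => (hU b y a hy hab.symm) ▸ hlt,
                    fun h => ⟨a, hab.symm, h⟩⟩
                rw [decide_eq_decide, ha', hb'] at hc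
                have hfne : (f a : ℕ) ≠ (f b : ℕ) := by
                  intro h
                  exact hne (f.injective (Fin.val_injective h))
                rcases Nat.lt_or_gt_of_ne hfne with h | h
                · exact absurd (hc.mp h) (Nat.lt_asymm h)
                · exact absurd (hc.mpr h) (Nat.lt_asymm h)
      · rw [Sym2.eq_iff] at he
        rcases he with ⟨rfl, rfl⟩ | ⟨rfl, rfl⟩
        · rw [if_pos rfl, if_neg (Ne.symm hne), if_pos rfl] at hc
          simp at hc
        · rw [if_neg hne, if_pos rfl, if_pos rfl] at hc
          simp at hc)
  simpa using C.colorable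

lemma chrom_eq_two {G : SimpleGraph V} {a b : V} (hab : G.Adj a b)
    (hc : G.Colorable 2) : G.chromaticNumber = 2 := by
  classical
  refine le_antisymm ?_ ?_
  · have := hc.chromaticNumber_le
    simpa using this
  · have hcl : G.IsClique ({a, b} : Finset V) := by
      intro x hx y hy hne
      simp only [Finset.coe_insert, Finset.coe_singleton, Set.mem_insert_iff,
        Set.mem_singleton_iff] at hx hy
      rcases hx with rfl | rfl <;> rcases hy with rfl | rfl
      · exact absurd rfl hne
      · exact hab
      · exact hab.symm
      · exact absurd rfl hne
    have := hcl.card_le_chromaticNumber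
    rwa [Finset.card_pair hab.ne] at this

end MyAux

/-- For a finite forest `F`: if `F` has an edge but no induced `P₃`, then `F` is
ω-unfrozen and χ-unfrozen; if `F` has an induced `P₃`, then `F` is neither. -/
theorem forest_omega_chi_unfrozenness {V : Type*} [Fintype V] (F : SimpleGraph V)
    (hacyc : F.IsAcyclic) :
    (F.edgeSet.Nonempty → ¬ HasInducedP3 F →
      (∀ u v : V, u ≠ v → ¬ F.Adj u v → clNum (adjoinEdge F u v) = clNum F) ∧
      (∀ u v : V, u ≠ v → ¬ F.Adj u v →
          (adjoinEdge F u v).chromaticNumber = F.chromaticNumber)) ∧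
    (HasInducedP3 F →
      ¬ (∀ u v : V, u ≠ v → ¬ F.Adj u v → clNum (adjoinEdge F u v) = clNum F) ∧
      ¬ (∀ u v : V, u ≠ v → ¬ F.Adj u v →
          (adjoinEdge F u v).chromaticNumber = F.chromaticNumber)) := by
  classical
  have hFtri : ∀ x y z : V, F.Adj x y → F.Adj y z → F.Adj x z → False :=
    fun x y z h1 h2 h3 => not_acyclic_of_triangle h1 h2 h3 hacyc
  constructor
  · intro hE hP3
    obtain ⟨a, b, hab⟩ : ∃ a b : V, F.Adj a b := by
      obtain ⟨e, he⟩ := hE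
      revert he
      exact Sym2.ind (fun a b he => ⟨a, b, he⟩) e
    have hU : ∀ x c d : V, F.Adj x c → F.Adj x d → c = d := by
      intro x c d h1 h2
      by_contra hne
      by_cases h3 : F.Adj c d
      · exact hFtri x c d h1 h3 h2
      · exact hP3 ⟨c, x, d, h1.ne', h2.ne, hne, h1.symm, h2, h3⟩
    constructor
    · intro u v huv hnadj
      have hGadj : (adjoinEdge F u v).Adj u v :=
        (adjoinEdge_adj F u v u v).mpr (Or.inr ⟨rfl, huv⟩)
      have hGtri : ∀ x y z : V, (adjoinEdge F u v).Adj x y →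
          (adjoinEdge F u v).Adj y z → (adjoinEdge F u v).Adj x z → False := by
        intro x y z hxy hyz hxz
        rw [adjoinEdge_adj] at hxy hyz hxz
        rcases hxy with hxy | ⟨hxy, hnexy⟩ <;> rcases hyz with hyz | ⟨hyz, hneyz⟩ <;>
          rcases hxz with hxz | ⟨hxz, hnexz⟩
        · exact hFtri x y z hxy hyz hxz
        · exact hnexz (hU y x z hxy.symm hyz)
        · exact hneyz (hU x y z hxy hxz)
        · have h' := hyz.trans hxz.symm
          rw [Sym2.eq_iff] at h'
          rcases h' with ⟨h1, -⟩ | ⟨h1, -⟩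
          · exact hxy.ne' h1
          · exact hneyz h1
        · exact hnexy ((hU z y x hyz.symm hxz.symm).symm)
        · have h' := hxy.trans hxz.symm
          rw [Sym2.eq_iff] at h'
          rcases h' with ⟨-, h1⟩ | ⟨h1, -⟩
          · exact hyz.ne h1
          · exact hnexz h1
        · have h' := hxy.trans hyz.symm
          rw [Sym2.eq_iff] at h'
          rcases h' with ⟨h1, -⟩ | ⟨h1, -⟩
          · exact hnexy h1
          · exact hxz.ne h1
        · have h' := hxy.trans hyz.symm
          rw [Sym2.eq_iff] at h'
          rcases h' with ⟨h1, -⟩ | ⟨h1, -⟩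
          · exact hnexy h1
          · exact hnexz h1
      rw [clNum_eq_two hGadj hGtri, clNum_eq_two hab hFtri]
    · intro u v huv hnadj
      have hGadj : (adjoinEdge F u v).Adj u v :=
        (adjoinEdge_adj F u v u v).mpr (Or.inr ⟨rfl, huv⟩)
      have hc2 : (adjoinEdge F u v).Colorable 2 := matching_colorable F hU u v huv hnadj
      have hle : F ≤ adjoinEdge F u v := fun x y h => (adjoinEdge_adj F u v x y).mpr (Or.inl h)
      have hcF : F.Colorable 2 := hc2.mono_left hle
      rw [chrom_eq_two hGadj hc2, chrom_eq_two hab hcF]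
  · rintro ⟨u, v, w, huv, hvw, huw, hauv, havw, hnauw⟩
    have hGuv : (adjoinEdge F u w).Adj u v := (adjoinEdge_adj F u w u v).mpr (Or.inl hauv)
    have hGvw : (adjoinEdge F u w).Adj v w := (adjoinEdge_adj F u w v w).mpr (Or.inl havw)
    have hGuw : (adjoinEdge F u w).Adj u w := (adjoinEdge_adj F u w u w).mpr (Or.inr ⟨rfl, huw⟩)
    have hK : (adjoinEdge F u w).IsNClique 3 ({u, v, w} : Finset V) :=
      is3Clique_triple_iff.mpr ⟨hGuv, hGuw, hGvw⟩
    constructor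
    · intro h
      have heq := h u w huw hnauw
      have h3 : 3 ≤ clNum (adjoinEdge F u w) := le_csSup (clNum_bddAbove _) ⟨_, hK⟩
      have h2 : clNum F ≤ 2 :=
        csSup_le ⟨0, ∅, by simp⟩ (clNum_le_two_of_no_triangle hFtri)
      omega
    · intro h
      have heq := h u w huw hnauw
      have hF2 : F.chromaticNumber ≤ 2 := by
        simpa using (acyclic_colorable_two hacyc).chromaticNumber_le
      have h3 : (3 : ℕ∞) ≤ (adjoinEdge F u w).chromaticNumber := by
        have := hK.isClique.card_le_chromaticNumber
        rwa [hK.card_eq] at this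
      rw [heq] at h3
      have hcontra : (3 : ℕ∞) ≤ 2 := h3.trans hF2
      norm_num at hcontra
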